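/- arXiv:2304.01206 — 5 statements merged into one kernel-verified Lean document; each statement's English description precedes it below -/
import Mathlib

section
/- The number Q(n) of squarefree natural numbers at most n satisfies Q(n) = n/ζ(2) + o(n); equivalently, Q(n)/n → 6/π² as n → ∞. -/
open Filter Finset ArithmeticFunction
open scoped ArithmeticFunction.Moebius


lemma aux_dvd {a b d : ℕ} (ha : Squarefree a) (hb : b ≠ 0) (h : d ^ 2 ∣ b ^ 2 * a) :
    d ∣ b := by
  have ha0 : a ≠ 0 := ha.ne_zero
  have hd0 : d ≠ 0 := by
    rintro rfl
    simp [pow_two, Nat.zero_dvd, mul_eq_zero, hb, ha0] at h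
  rw [← Nat.factorization_le_iff_dvd hd0 hb]
  rw [← Nat.factorization_le_iff_dvd (by positivity) (by positivity)] at h
  intro p
  have h1 := (Finsupp.le_def.mp h) p
  have h2 := ha.natFactorization_le_one p
  simp [Nat.factorization_mul (pow_ne_zero 2 hb) ha0, Nat.factorization_pow] at h1
  omega

lemma aux_sum_moebius {m n : ℕ} (hm1 : 1 ≤ m) (hmn : m ≤ n) :
    ∑ d ∈ (Finset.Icc 1 n).filter (fun d => d ^ 2 ∣ m), μ d
      = if Squarefree m then 1 else 0 := by
  obtain ⟨a, b, hab, ha⟩ := Nat.sq_mul_squarefree m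
  have hm0 : m ≠ 0 := by omega
  have hb0 : b ≠ 0 := by rintro rfl; simp at hab; omega
  have hfil : (Finset.Icc 1 n).filter (fun d => d ^ 2 ∣ m) = b.divisors := by
    ext d
    simp only [mem_filter, mem_Icc, Nat.mem_divisors]
    constructor
    · rintro ⟨⟨-, -⟩, hd⟩
      exact ⟨aux_dvd ha hb0 (hab ▸ hd), hb0⟩
    · rintro ⟨hd, -⟩
      have hd0 : d ≠ 0 := by rintro rfl; exact hb0 (Nat.eq_zero_of_zero_dvd hd)
      have hdm : d ^ 2 ∣ m := hab ▸ (pow_dvd_pow_of_dvd hd 2).mul_right a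
      refine ⟨⟨Nat.one_le_iff_ne_zero.mpr hd0, ?_⟩, hdm⟩
      calc d ≤ d ^ 2 := Nat.le_self_pow two_ne_zero d
        _ ≤ m := Nat.le_of_dvd (by omega) hdm
        _ ≤ n := hmn
  rw [hfil]
  have h := congrArg (fun f : ArithmeticFunction ℤ => f b) moebius_mul_coe_zeta
  simp only [coe_mul_zeta_apply, one_apply] at h
  rw [h]
  congr 1
  simp only [eq_iff_iff]
  constructor
  · rintro rfl; rw [one_pow, one_mul] at hab; exact hab ▸ ha
  · intro hm
    have : IsUnit b := hm b (by rw [← pow_two]; exact Dvd.intro a hab)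
    exact Nat.isUnit_iff.mp this

lemma aux_count (n : ℕ) :
    (((Finset.Icc 1 n).filter Squarefree).card : ℤ)
      = ∑ d ∈ Finset.Icc 1 n, μ d * ((n / d ^ 2 : ℕ) : ℤ) := by
  calc (((Finset.Icc 1 n).filter Squarefree).card : ℤ)
      = ∑ m ∈ Finset.Icc 1 n, if Squarefree m then (1:ℤ) else 0 := by
        simp [Finset.sum_boole]
    _ = ∑ m ∈ Finset.Icc 1 n, ∑ d ∈ (Finset.Icc 1 n).filter (fun d => d ^ 2 ∣ m), μ d := by
        refine Finset.sum_congr rfl fun m hm => ?_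
        simp only [mem_Icc] at hm
        exact (aux_sum_moebius hm.1 hm.2).symm
    _ = ∑ m ∈ Finset.Icc 1 n, ∑ d ∈ Finset.Icc 1 n, if d ^ 2 ∣ m then μ d else 0 := by
        simp [Finset.sum_filter]
    _ = ∑ d ∈ Finset.Icc 1 n, ∑ m ∈ Finset.Icc 1 n, if d ^ 2 ∣ m then μ d else 0 :=
        Finset.sum_comm
    _ = ∑ d ∈ Finset.Icc 1 n, μ d * ((n / d ^ 2 : ℕ) : ℤ) := by
        refine Finset.sum_congr rfl fun d hd => ?_
        rw [← Finset.sum_filter, Finset.sum_const, nsmul_eq_mul, mul_comm]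
        congr 1
        rw [show Finset.Icc 1 n = Finset.Ioc 0 n from by rw [← Finset.Icc_add_one_left_eq_Ioc, zero_add]]
        exact_mod_cast congrArg (Nat.cast : ℕ → ℤ) (Nat.Ioc_filter_dvd_card_eq_div n (d ^ 2))

lemma aux_summable : Summable (fun d : ℕ => |(μ d : ℝ)| / (d:ℝ) ^ 2) := by
  refine Summable.of_nonneg_of_le (fun d => by positivity) (fun d => ?_)
    (Real.summable_one_div_nat_pow.mpr one_lt_two)
  have habs : |(μ d : ℝ)| ≤ 1 := by
    have h := moebius_sq (n := d)
    have h2 : ((μ d : ℝ)) ^ 2 ≤ 1 := by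
      rw [← Int.cast_pow, h]; split_ifs <;> norm_num
    nlinarith [abs_nonneg ((μ d : ℝ)), sq_abs ((μ d : ℝ))]
  exact div_le_div_of_nonneg_right habs (by positivity) |>.trans (le_refl _) |> fun h => h

lemma aux_tsum : ∑' d : ℕ, ((μ d : ℝ) / (d:ℝ) ^ 2) = 6 / Real.pi ^ 2 := by
  have hsum : Summable (fun d : ℕ => (μ d : ℝ) / (d:ℝ) ^ 2) := by
    refine aux_summable.of_norm_bounded (fun d => ?_)
    rw [Real.norm_eq_abs, abs_div, abs_pow, Nat.abs_cast]
  have h2 : (1:ℝ) < (2:ℂ).re := by norm_num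
  have hkey : (↑(∑' d : ℕ, ((μ d : ℝ) / (d:ℝ) ^ 2)) : ℂ) = (riemannZeta 2)⁻¹ := by
    have hmap := Complex.ofRealCLM.map_tsum hsum
    simp only [Complex.ofRealCLM_apply] at hmap
    rw [hmap]
    have hL : LSeries (fun n => (μ n : ℂ)) 2 = (riemannZeta 2)⁻¹ := by
      have hm := LSeries_zeta_mul_Lseries_moebius h2
      rw [LSeries_zeta_eq_riemannZeta h2] at hm
      field_simp [riemannZeta_ne_zero_of_one_lt_re h2] at hm ⊢
      linear_combination hm
    rw [← hL, LSeries]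
    refine tsum_congr fun n => ?_
    rcases eq_or_ne n 0 with rfl | hn
    · simp [LSeries.term_zero]
    · rw [LSeries.term_of_ne_zero hn,
        show ((2:ℂ)) = ((2:ℕ):ℂ) by norm_num, Complex.cpow_natCast]
      push_cast
      ring
  rw [riemannZeta_two] at hkey
  rw [show ((Real.pi:ℂ)^2/6)⁻¹ = ((6 / Real.pi ^ 2 : ℝ) : ℂ) by
    push_cast; rw [inv_div]] at hkey
  exact_mod_cast hkey

lemma aux_div_tendsto {k : ℕ} (hk : k ≠ 0) :
    Tendsto (fun n : ℕ => ((n / k : ℕ) : ℝ) / n) atTop (nhds (1 / k)) := by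
  have hk' : (0:ℝ) < k := by positivity
  have hlow : Tendsto (fun n : ℕ => 1 / (k:ℝ) - 1 / n) atTop (nhds (1 / k)) := by
    simpa using tendsto_const_nhds.sub (tendsto_one_div_atTop_nhds_zero_nat (𝕜 := ℝ))
  refine tendsto_of_tendsto_of_tendsto_of_le_of_le' hlow tendsto_const_nhds ?_ ?_
  · filter_upwards [eventually_ge_atTop 1] with n hn
    have hn' : (0:ℝ) < n := by exact_mod_cast hn
    have hk0 : (k:ℝ) ≠ 0 := by positivity
    have hmod : n % k < k := Nat.mod_lt _ (Nat.pos_of_ne_zero hk)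
    have hdm : k * (n / k) + n % k = n := Nat.div_add_mod n k
    have h1 : (n:ℝ) ≤ (k:ℝ) * ((n / k : ℕ):ℝ) + k := by
      have e1 : ((k * (n / k) + n % k : ℕ) : ℝ) = (n:ℝ) := by exact_mod_cast hdm
      have e2 : ((n % k : ℕ):ℝ) < (k:ℝ) := by exact_mod_cast hmod
      push_cast at e1
      nlinarith
    rw [div_sub_div _ _ hk0 (ne_of_gt hn'), div_le_div_iff₀ (by positivity) hn']
    nlinarith [Nat.cast_nonneg (α := ℝ) (n / k)]
  · filter_upwards [eventually_ge_atTop 1] with n hn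
    have hn' : (0:ℝ) < n := by exact_mod_cast hn
    have := Nat.cast_div_le (m := n) (n := k) (α := ℝ)
    calc ((n / k : ℕ) : ℝ) / n ≤ ((n:ℝ)/k) / n := by gcongr
      _ = 1 / k := by field_simp


lemma aux_abs (d : ℕ) : |(μ d : ℝ)| ≤ 1 := by
  have h := moebius_sq (n := d)
  have h2 : ((μ d : ℝ)) ^ 2 ≤ 1 := by
    rw [← Int.cast_pow, h]; split_ifs <;> norm_num
  nlinarith [abs_nonneg ((μ d : ℝ)), sq_abs ((μ d : ℝ))]

theorem squarefree_count_asymptotic :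
    Tendsto (fun n : ℕ =>
        (((Finset.Icc 1 n).filter Squarefree).card : ℝ) / n)
      atTop (nhds (6 / Real.pi ^ 2)) := by
  have hbound : Summable (fun d : ℕ => 1 / (d:ℝ) ^ 2) :=
    Real.summable_one_div_nat_pow.mpr one_lt_two
  set F : ℕ → ℕ → ℝ := fun n d =>
    if d ∈ Finset.Icc 1 n then (μ d : ℝ) * ((n / d ^ 2 : ℕ) : ℝ) / n else 0 with hF
  have heq : ∀ n : ℕ, ∑' d, F n d
      = (((Finset.Icc 1 n).filter Squarefree).card : ℝ) / n := by
    intro n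
    rw [tsum_eq_sum (s := Finset.Icc 1 n) (f := F n) (fun d hd => by simp only [hF]; rw [if_neg hd])]
    have hc : (((Finset.Icc 1 n).filter Squarefree).card : ℝ)
        = ∑ d ∈ Finset.Icc 1 n, (μ d : ℝ) * ((n / d ^ 2 : ℕ) : ℝ) := by
      have h2 : ((((Finset.Icc 1 n).filter Squarefree).card : ℤ) : ℝ)
          = ((∑ d ∈ Finset.Icc 1 n, μ d * ((n / d ^ 2 : ℕ) : ℤ) : ℤ) : ℝ) := by
        rw [aux_count n]
      push_cast at h2
      exact h2
    rw [hc, Finset.sum_div]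
    exact Finset.sum_congr rfl fun d hd => by simp only [hF]; rw [if_pos hd]
  rw [← aux_tsum]
  refine Tendsto.congr heq ?_
  refine tendsto_tsum_of_dominated_convergence hbound ?_ ?_
  · intro d
    rcases eq_or_ne d 0 with rfl | hd
    · have : ∀ n : ℕ, F n 0 = 0 := fun n => by simp [hF]
      simp only [this, Nat.cast_zero]
      simpa using tendsto_const_nhds
    · have h1 := aux_div_tendsto (pow_ne_zero 2 hd)
      have h2 := h1.const_mul ((μ d : ℝ))
      have h3 : (μ d : ℝ) * (1 / ((d ^ 2 : ℕ) : ℝ)) = (μ d : ℝ) / (d:ℝ) ^ 2 := by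
        push_cast; ring
      rw [h3] at h2
      refine h2.congr' ?_
      filter_upwards [eventually_ge_atTop d] with n hn
      have hdn : d ∈ Finset.Icc 1 n := by
        simp [Nat.one_le_iff_ne_zero, hd, hn]
      simp only [hF, hdn, if_pos]
      ring
  · filter_upwards [eventually_ge_atTop 1] with n hn d
    have hn' : (0:ℝ) < n := by exact_mod_cast hn
    by_cases hdn : d ∈ Finset.Icc 1 n
    · have hd : d ≠ 0 := by simp [Finset.mem_Icc] at hdn; omega
      have hd' : (0:ℝ) < (d:ℝ) ^ 2 := by positivity
      simp only [hF, hdn, if_pos, Real.norm_eq_abs, abs_div, abs_mul, Nat.abs_cast]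
      calc |(μ d : ℝ)| * ((n / d ^ 2 : ℕ) : ℝ) / (n:ℝ)
          ≤ 1 * ((n:ℝ) / (d:ℝ) ^ 2) / (n:ℝ) := by
            gcongr
            · exact aux_abs d
            · calc ((n / d ^ 2 : ℕ) : ℝ) ≤ (n:ℝ) / ((d ^ 2 : ℕ):ℝ) := Nat.cast_div_le
                _ = (n:ℝ) / (d:ℝ) ^ 2 := by push_cast; ring
        _ = 1 / (d:ℝ) ^ 2 := by field_simp
    · simp only [hF, hdn, if_neg, not_false_iff, norm_zero]
      positivity
end

section
/- The number of natural numbers at most n that are NOT squarefree is (1 - 1/ζ(2))·n + o(n). -/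
open Filter Finset
open scoped ArithmeticFunction.Moebius

lemma sum_mu_divisors (n : ℕ) : ∑ d ∈ n.divisors, μ d = if n = 1 then 1 else 0 := by
  have h := ArithmeticFunction.coe_mul_zeta_apply (R := ℤ)
    (f := ArithmeticFunction.moebius) (x := n)
  rw [ArithmeticFunction.moebius_mul_coe_zeta, ArithmeticFunction.one_apply] at h
  exact h.symm

lemma ind_eq (m : ℕ) (hm : 1 ≤ m) :
    (if Squarefree m then (1:ℤ) else 0) = ∑ d ∈ Icc 1 m, if d^2 ∣ m then μ d else 0 := by
  obtain ⟨a, b, hba, ha⟩ := Nat.sq_mul_squarefree m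
  have hm0 : m ≠ 0 := by omega
  have hb0 : b ≠ 0 := by rintro rfl; simp at hba; omega
  have ha0 : a ≠ 0 := by rintro rfl; simp at hba; omega
  have key : ∀ d : ℕ, d ^ 2 ∣ m ↔ d ∣ b := by
    intro d
    constructor
    · intro hd
      have hd0 : d ≠ 0 := by rintro rfl; simp at hd; omega
      rw [← Nat.factorization_le_iff_dvd hd0 hb0]
      have h1 : (d ^ 2).factorization ≤ m.factorization :=
        (Nat.factorization_le_iff_dvd (by positivity) hm0).2 hd
      intro p
      have h2 := h1 p
      rw [Nat.factorization_pow, ← hba, Nat.factorization_mul (by positivity) ha0,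
        Nat.factorization_pow] at h2
      have h3 : a.factorization p ≤ 1 :=
        (Nat.squarefree_iff_factorization_le_one ha0).1 ha p
      simp only [Finsupp.smul_apply, Finsupp.add_apply, smul_eq_mul] at h2
      omega
    · intro hd
      calc d ^ 2 ∣ b ^ 2 := pow_dvd_pow_of_dvd hd 2
        _ ∣ m := ⟨a, hba.symm⟩
  have hfilter : (Icc 1 m).filter (fun d => d ^ 2 ∣ m) = b.divisors := by
    ext d
    simp only [mem_filter, mem_Icc, Nat.mem_divisors, key]
    constructor
    · rintro ⟨_, hd⟩; exact ⟨hd, hb0⟩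
    · rintro ⟨hd, -⟩
      have hd0 : d ≠ 0 := by rintro rfl; exact hb0 (Nat.eq_zero_of_zero_dvd hd)
      have hbm : b ≤ m := by
        calc b ≤ b ^ 2 := Nat.le_self_pow two_ne_zero b
          _ ≤ b ^ 2 * a := Nat.le_mul_of_pos_right _ (Nat.pos_of_ne_zero ha0)
          _ = m := hba
      exact ⟨⟨Nat.one_le_iff_ne_zero.2 hd0, le_trans (Nat.le_of_dvd (Nat.pos_of_ne_zero hb0) hd) hbm⟩, hd⟩
  have hsq : Squarefree m ↔ b = 1 := by
    constructor
    · intro h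
      have : b * b ∣ m := by rw [← pow_two]; exact ⟨a, hba.symm⟩
      exact Nat.isUnit_iff.mp (h b this)
    · rintro rfl; rw [← hba]; simpa using ha
  rw [sum_ite, sum_const_zero, add_zero, hfilter, sum_mu_divisors]
  simp only [hsq]

lemma count_eq (n : ℕ) :
    (((Icc 1 n).filter (fun m => Squarefree m)).card : ℤ)
      = ∑ d ∈ Icc 1 n, μ d * (n / d^2 : ℕ) := by
  have h1 : (((Icc 1 n).filter (fun m => Squarefree m)).card : ℤ)
      = ∑ m ∈ Icc 1 n, if Squarefree m then (1:ℤ) else 0 := by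
    rw [sum_ite, sum_const_zero, add_zero, sum_const, nsmul_eq_mul, mul_one]
  rw [h1]
  have h2 : ∀ m ∈ Icc 1 n, (if Squarefree m then (1:ℤ) else 0)
      = ∑ d ∈ Icc 1 n, if d^2 ∣ m then μ d else 0 := by
    intro m hm
    rw [mem_Icc] at hm
    rw [ind_eq m hm.1]
    refine sum_subset (Icc_subset_Icc_right hm.2) ?_
    intro d hd hdm
    rw [mem_Icc] at hd hdm
    have : ¬ d ^ 2 ∣ m := by
      intro h
      have h2 := Nat.le_of_dvd (by omega) h
      have h3 : d ≤ d ^ 2 := Nat.le_self_pow two_ne_zero d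
      omega
    simp [this]
  rw [sum_congr rfl h2, sum_comm]
  refine sum_congr rfl fun d hd => ?_
  rw [mem_Icc] at hd
  have : ∑ m ∈ Icc 1 n, (if d ^ 2 ∣ m then μ d else 0)
      = μ d * ((Icc 1 n).filter (fun m => d ^ 2 ∣ m)).card := by
    rw [sum_ite, sum_const_zero, add_zero, sum_const, nsmul_eq_mul, mul_comm]
  rw [this]
  congr 1
  have hIcc : Icc 1 n = Ioc 0 n := by ext x; simp; omega
  rw [hIcc]
  exact_mod_cast Nat.Ioc_filter_dvd_card_eq_div n (d^2)

lemma tsum_mu : ∑' d : ℕ, (μ d : ℝ) / (d : ℝ)^2 = 6 / Real.pi ^ 2 := by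
  have hs : (1:ℝ) < (2:ℂ).re := by norm_num
  have hmul := ArithmeticFunction.LSeries_zeta_mul_Lseries_moebius (s := 2) hs
  rw [ArithmeticFunction.LSeries_zeta_eq_riemannZeta hs, riemannZeta_two] at hmul
  have hLmu : LSeries (fun n => (μ n : ℂ)) 2 = 6 / (Real.pi : ℂ) ^ 2 := by
    have hpi : ((Real.pi : ℂ))^2 ≠ 0 := by
      simpa using Complex.ofReal_ne_zero.mpr Real.pi_ne_zero
    field_simp at hmul ⊢
    linear_combination hmul
  have hterm : LSeries (fun n => (μ n : ℂ)) 2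
      = ∑' n : ℕ, (((μ n : ℝ) / (n : ℝ)^2 : ℝ) : ℂ) := by
    refine tsum_congr fun n => ?_
    rcases eq_or_ne n 0 with rfl | hn
    · simp [LSeries.term_zero]
    · rw [LSeries.term_of_ne_zero hn]
      rw [show (2:ℂ) = ((2:ℕ):ℂ) by norm_num, Complex.cpow_natCast]
      push_cast
      ring
  rw [hterm, ← Complex.ofReal_tsum] at hLmu
  have : ((∑' d : ℕ, (μ d : ℝ) / (d : ℝ)^2 : ℝ) : ℂ) = ((6 / Real.pi ^ 2 : ℝ) : ℂ) := by
    rw [hLmu]; push_cast; ring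
  exact_mod_cast this

lemma sf_tendsto : Filter.Tendsto (fun n : ℕ =>
      (((Icc 1 n).filter (fun m => Squarefree m)).card : ℝ) / n)
    atTop (nhds (6 / Real.pi ^ 2)) := by
  set f : ℕ → ℕ → ℝ := fun n d => if d ∈ Icc 1 n then (μ d : ℝ) * (↑(n / d^2)) / n else 0
    with hf
  have hratio : ∀ d : ℕ, 1 ≤ d →
      Tendsto (fun n : ℕ => ((n / d^2 : ℕ) : ℝ) / n) atTop (nhds (1 / (d:ℝ)^2)) := by
    intro d hd
    have hd2 : (0:ℝ) < (d:ℝ)^2 := by positivity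
    have hlow : Tendsto (fun n : ℕ => 1 / (d:ℝ)^2 - 1 / n) atTop (nhds (1 / (d:ℝ)^2)) := by
      simpa only [sub_zero] using (tendsto_const_nhds (x := 1 / (d:ℝ)^2)).sub
          (tendsto_one_div_atTop_nhds_zero_nat : Tendsto (fun n : ℕ => 1 / (n : ℝ)) atTop (nhds 0))
    refine tendsto_of_tendsto_of_tendsto_of_le_of_le' hlow tendsto_const_nhds ?_ ?_
    · filter_upwards [eventually_ge_atTop 1] with n hn
      have hmod := Nat.div_add_mod n (d^2)
      have hlt : n % d^2 < d^2 := Nat.mod_lt _ (by positivity)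
      have hn0 : (0:ℝ) < (n:ℝ) := by exact_mod_cast hn
      rw [div_sub_div _ _ (ne_of_gt hd2) (ne_of_gt hn0), div_le_div_iff₀ (by positivity) hn0]
      have h1 : ((d:ℝ)^2) * ((n / d^2 : ℕ) : ℝ) + ((n % d^2 : ℕ) : ℝ) = (n : ℝ) := by
        exact_mod_cast hmod
      have h2 : ((n % d^2 : ℕ) : ℝ) < (d:ℝ)^2 := by exact_mod_cast hlt
      nlinarith
    · filter_upwards [eventually_ge_atTop 1] with n hn
      have hn0 : (0:ℝ) < (n:ℝ) := by exact_mod_cast hn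
      rw [div_le_div_iff₀ hn0 hd2]
      have h1 : ((n / d^2 : ℕ) : ℝ) * (d:ℝ)^2 ≤ (n:ℝ) := by
        have := Nat.div_mul_le_self n (d^2)
        exact_mod_cast this
      linarith
  have hpt : ∀ d : ℕ, Tendsto (fun n : ℕ => f n d) atTop (nhds ((μ d : ℝ) / (d:ℝ)^2)) := by
    intro d
    rcases Nat.eq_zero_or_pos d with rfl | hd
    · simpa [hf] using (tendsto_const_nhds : Tendsto (fun _ : ℕ => (0:ℝ)) atTop _)
    · have h1 : Tendsto (fun n : ℕ => (μ d : ℝ) * (((n / d^2 : ℕ) : ℝ) / n)) atTop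
          (nhds ((μ d : ℝ) * (1 / (d:ℝ)^2))) := (hratio d hd).const_mul _
      have h2 : (μ d : ℝ) * (1 / (d:ℝ)^2) = (μ d : ℝ) / (d:ℝ)^2 := by ring
      rw [h2] at h1
      refine h1.congr' ?_
      filter_upwards [eventually_ge_atTop d] with n hn
      have hmem : d ∈ Icc 1 n := mem_Icc.mpr ⟨hd, hn⟩
      simp only [hf]
      rw [if_pos hmem]
      ring
  have hbound : ∀ᶠ n : ℕ in atTop, ∀ d : ℕ, ‖f n d‖ ≤ 1 / (d:ℝ)^2 := by
    filter_upwards [eventually_ge_atTop 1] with n hn d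
    by_cases hd : d ∈ Icc 1 n
    · obtain ⟨hd1, hdn⟩ := mem_Icc.mp hd
      have hd2 : (0:ℝ) < (d:ℝ)^2 := by
        have h0 : 0 < d := hd1
        positivity
      have hn0 : (0:ℝ) < (n:ℝ) := by exact_mod_cast hn
      have hmu : |(μ d : ℝ)| ≤ 1 := by
        exact_mod_cast ArithmeticFunction.abs_moebius_le_one (n := d)
      have hdiv : ((n / d^2 : ℕ) : ℝ) ≤ (n:ℝ) / (d:ℝ)^2 := by
        have := Nat.cast_div_le (m := n) (n := d^2) (α := ℝ)
        simpa using this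
      have hnd : (0:ℝ) ≤ ((n / d^2 : ℕ) : ℝ) := by positivity
      have hfd : f n d = (μ d : ℝ) * ((n / d^2 : ℕ) : ℝ) / n := by
        simp only [hf]; rw [if_pos hd]
      rw [hfd, Real.norm_eq_abs, abs_div, abs_mul, abs_of_nonneg hnd, abs_of_pos hn0]
      rw [div_le_div_iff₀ hn0 hd2]
      calc |(μ d : ℝ)| * ((n / d^2 : ℕ) : ℝ) * (d:ℝ)^2
          ≤ 1 * ((n:ℝ) / (d:ℝ)^2) * (d:ℝ)^2 := by
            apply mul_le_mul_of_nonneg_right _ (le_of_lt hd2)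
            exact mul_le_mul hmu hdiv hnd (by norm_num)
        _ = (n:ℝ) := by field_simp
        _ = 1 * (n:ℝ) := by ring
    · have hfd : f n d = 0 := by simp only [hf]; rw [if_neg hd]
      rw [hfd, norm_zero]
      positivity
  have hsummable : Summable (fun d : ℕ => 1 / (d:ℝ)^2) := by
    have := (Real.summable_one_div_nat_pow (p := 2)).mpr one_lt_two
    simpa using this
  have htsum := tendsto_tsum_of_dominated_convergence hsummable hpt hbound
  rw [tsum_mu] at htsum
  refine htsum.congr' ?_
  filter_upwards [eventually_ge_atTop 1] with n hn
  have hsupp : ∀ d ∉ Icc 1 n, f n d = 0 := by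
    intro d hd; simp only [hf]; rw [if_neg hd]
  rw [tsum_eq_sum hsupp]
  have hcast : (((Icc 1 n).filter (fun m => Squarefree m)).card : ℝ)
      = ∑ d ∈ Icc 1 n, (μ d : ℝ) * ((n / d^2 : ℕ) : ℝ) := by
    have h := congrArg (fun z : ℤ => (z : ℝ)) (count_eq n)
    push_cast at h
    exact h
  have hn0 : (n:ℝ) ≠ 0 := by positivity
  rw [hcast, Finset.sum_div]
  refine Finset.sum_congr rfl fun d hd => ?_
  simp only [hf]
  rw [if_pos hd]

theorem non_squarefree_count_asymptotic :
    Tendsto (fun n : ℕ =>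
        (((Finset.Icc 1 n).filter (fun m => ¬ Squarefree m)).card : ℝ) / n)
      atTop (nhds (1 - 6 / Real.pi ^ 2)) := by
  have h := tendsto_const_nhds (x := (1:ℝ)) (f := atTop (α := ℕ)) |>.sub sf_tendsto
  refine h.congr' ?_
  filter_upwards [eventually_ge_atTop 1] with n hn
  have hsplit := Finset.card_filter_add_card_filter_not
    (s := Icc 1 n) (p := fun m => Squarefree m)
  have hcard : (Icc 1 n).card = n := by rw [Nat.card_Icc]; omega
  rw [hcard] at hsplit
  have hn0 : (n:ℝ) ≠ 0 := by positivity
  have hS : ((((Icc 1 n).filter (fun m => ¬ Squarefree m)).card : ℝ))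
      = (n : ℝ) - (((Icc 1 n).filter (fun m => Squarefree m)).card : ℝ) := by
    have : ((Icc 1 n).filter (fun m => Squarefree m)).card
        + ((Icc 1 n).filter (fun m => ¬ Squarefree m)).card = n := hsplit
    have h2 : ((Icc 1 n).filter (fun m => ¬ Squarefree m)).card
        = n - ((Icc 1 n).filter (fun m => Squarefree m)).card := by omega
    have h3 : ((Icc 1 n).filter (fun m => Squarefree m)).card ≤ n := by omega
    rw [h2]
    push_cast [h3]
    ring
  rw [hS, sub_div, div_self hn0]
end

section
/- The number of powerful numbers at most n is o(n), i.e., (1/n)·#{m ≤ n : m powerful} → 0 as n → ∞. -/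
open Filter

lemma powerful_decomp {m : ℕ} (hm : 1 ≤ m)
    (hpow : ∀ p : ℕ, p.Prime → p ∣ m → p ^ 2 ∣ m) :
    ∃ a b : ℕ, b ^ 2 * a = m ∧ a ∣ b := by
  obtain ⟨a, b, hab, hsq⟩ := Nat.sq_mul_squarefree m
  refine ⟨a, b, hab, ?_⟩
  have hm0 : m ≠ 0 := by omega
  have ha0 : a ≠ 0 := by rintro rfl; simp at hab; omega
  have hb0 : b ≠ 0 := by rintro rfl; simp at hab; omega
  rw [← Nat.factorization_le_iff_dvd ha0 hb0, Finsupp.le_def]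
  intro p
  by_cases hpa : a.factorization p = 0
  · simp [hpa]
  have hp : p.Prime := Nat.prime_of_mem_primeFactors (by
    simp [Nat.support_factorization] at hpa ⊢
    exact Nat.mem_primeFactors.mp (Nat.support_factorization a ▸ Finsupp.mem_support_iff.mpr hpa)
    )
  have hpdvda : p ∣ a := Nat.dvd_of_factorization_pos hpa
  have hpm : p ∣ m := hpdvda.trans ⟨b ^ 2, by rw [← hab]; ring⟩
  have h2 : p ^ 2 ∣ m := hpow p hp hpm
  have ha1 : a.factorization p = 1 := by
    have := (Nat.squarefree_iff_factorization_le_one ha0).mp hsq p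
    omega
  have h2' : 2 ≤ m.factorization p := by
    have := (Nat.Prime.pow_dvd_iff_le_factorization hp hm0).mp h2
    exact this
  have hfact : m.factorization p = 2 * b.factorization p + a.factorization p := by
    rw [← hab, Nat.factorization_mul (pow_ne_zero 2 hb0) ha0, Nat.factorization_pow]
    simp [mul_comm]
  omega

open scoped Classical in
noncomputable def pdec (m : ℕ) : ℕ × ℕ :=
  if h : ∃ a b : ℕ, b ^ 2 * a = m ∧ a ∣ b then (h.choose_spec.choose, h.choose) else 0

lemma pdec_spec {m : ℕ} (h : ∃ a b : ℕ, b ^ 2 * a = m ∧ a ∣ b) :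
    (pdec m).1 ^ 2 * (pdec m).2 = m ∧ (pdec m).2 ∣ (pdec m).1 := by
  rw [pdec, dif_pos h]
  exact h.choose_spec.choose_spec

open scoped Classical in
theorem powerful_count_little_o :
    Tendsto (fun n : ℕ =>
        (((Finset.Icc 1 n).filter (fun m => ∀ p : ℕ, p.Prime → p ∣ m → p ^ 2 ∣ m)).card : ℝ) / n)
      atTop (nhds 0) := by
  -- counting bound
  have key : ∀ n : ℕ,
      (((Finset.Icc 1 n).filter (fun m => ∀ p : ℕ, p.Prime → p ∣ m → p ^ 2 ∣ m)).card : ℝ)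
        ≤ (Nat.sqrt n + 1) * (⌊(n : ℝ) ^ ((1:ℝ)/3)⌋₊ + 1) := by
    intro n
    set K := ⌊(n : ℝ) ^ ((1:ℝ)/3)⌋₊
    have hcard : ((Finset.Icc 1 n).filter
        (fun m => ∀ p : ℕ, p.Prime → p ∣ m → p ^ 2 ∣ m)).card
        ≤ ((Finset.Icc 0 (Nat.sqrt n)) ×ˢ (Finset.Icc 0 K)).card := by
      apply Finset.card_le_card_of_injOn pdec
      · intro m hmem
        simp only [Finset.mem_coe, Finset.mem_filter, Finset.mem_Icc] at hmem
        obtain ⟨⟨hm1, hmn⟩, hpow⟩ := hmem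
        obtain ⟨hprod, hdvd⟩ := pdec_spec (powerful_decomp hm1 hpow)
        set b := (pdec m).1; set a := (pdec m).2
        have hb2 : b ^ 2 ≤ n := by
          have ha1 : 1 ≤ a := by
            rcases Nat.eq_zero_or_pos a with h | h
            · rw [h, mul_zero] at hprod; omega
            · exact h
          nlinarith [hprod, hmn]
        have ha3 : a ^ 3 ≤ n := by
          have : a ^ 3 ∣ m := by
            obtain ⟨c, hc⟩ := hdvd
            exact ⟨c ^ 2, by rw [← hprod, hc]; ring⟩
          exact le_trans (Nat.le_of_dvd (by omega) this) hmn
        simp only [Finset.mem_coe, Finset.mem_product, Finset.mem_Icc]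
        refine ⟨⟨Nat.zero_le _, ?_⟩, Nat.zero_le _, ?_⟩
        · exact Nat.le_sqrt.mpr (by nlinarith [hb2])
        · apply Nat.le_floor
          have han : ((a : ℝ)) ^ (3:ℕ) ≤ (n : ℝ) := by exact_mod_cast ha3
          calc (a : ℝ) = ((a : ℝ) ^ (3:ℕ)) ^ ((1:ℝ)/3) := by
                rw [← Real.rpow_natCast (a:ℝ) 3, ← Real.rpow_mul (by positivity)]
                norm_num
            _ ≤ (n : ℝ) ^ ((1:ℝ)/3) :=
                Real.rpow_le_rpow (by positivity) han (by norm_num)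
      · intro m₁ h₁ m₂ h₂ heq
        simp only [Finset.coe_filter, Set.mem_setOf_eq, Finset.mem_Icc] at h₁ h₂
        have e₁ := (pdec_spec (powerful_decomp h₁.1.1 h₁.2)).1
        have e₂ := (pdec_spec (powerful_decomp h₂.1.1 h₂.2)).1
        rw [← e₁, ← e₂, heq]
    calc (((Finset.Icc 1 n).filter
          (fun m => ∀ p : ℕ, p.Prime → p ∣ m → p ^ 2 ∣ m)).card : ℝ)
        ≤ (((Finset.Icc 0 (Nat.sqrt n)) ×ˢ (Finset.Icc 0 K)).card : ℝ) := by
          exact_mod_cast hcard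
      _ = (Nat.sqrt n + 1) * (K + 1) := by
          rw [Finset.card_product, Nat.card_Icc, Nat.card_Icc]
          push_cast
          ring
  -- the upper bound tends to 0
  have hupper : Tendsto (fun n : ℕ =>
      (((n:ℝ) ^ ((1:ℝ)/2) + 1) * ((n:ℝ) ^ ((1:ℝ)/3) + 1)) / n) atTop (nhds 0) := by
    have h1 : Tendsto (fun x : ℝ =>
        x ^ (-(1:ℝ)/6) + x ^ (-(1:ℝ)/2) + x ^ (-(2:ℝ)/3) + x ^ (-(1:ℝ))) atTop (nhds 0) := by
      have t1 := tendsto_rpow_neg_atTop (show (0:ℝ) < 1/6 by norm_num)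
      have t2 := tendsto_rpow_neg_atTop (show (0:ℝ) < 1/2 by norm_num)
      have t3 := tendsto_rpow_neg_atTop (show (0:ℝ) < 2/3 by norm_num)
      have t4 := tendsto_rpow_neg_atTop (show (0:ℝ) < 1 by norm_num)
      have := ((t1.add t2).add t3).add t4
      simpa only [add_zero, neg_div] using this.congr (fun x => by norm_num)
    have h2 := h1.comp tendsto_natCast_atTop_atTop (α := ℕ)
    apply h2.congr'
    filter_upwards [eventually_ge_atTop 1] with n hn
    have hn0 : (0:ℝ) < n := by exact_mod_cast hn
    have hne : (n:ℝ) ≠ 0 := ne_of_gt hn0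
    simp only [Function.comp_apply]
    rw [eq_div_iff hne]
    have expand : ∀ y : ℝ, (n:ℝ) ^ y * (n:ℝ) = (n:ℝ) ^ (y + 1) := fun y => by
      rw [Real.rpow_add hn0, Real.rpow_one]
    rw [show ((n:ℝ) ^ ((1:ℝ)/2) + 1) * ((n:ℝ) ^ ((1:ℝ)/3) + 1)
        = (n:ℝ) ^ ((1:ℝ)/2) * (n:ℝ) ^ ((1:ℝ)/3) + (n:ℝ) ^ ((1:ℝ)/2)
          + (n:ℝ) ^ ((1:ℝ)/3) + 1 by ring,
      ← Real.rpow_add hn0]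
    rw [show ((n:ℝ) ^ (-(1:ℝ)/6) + (n:ℝ) ^ (-(1:ℝ)/2) + (n:ℝ) ^ (-(2:ℝ)/3) + (n:ℝ) ^ (-(1:ℝ))) * (n:ℝ)
        = (n:ℝ) ^ (-(1:ℝ)/6) * (n:ℝ) + (n:ℝ) ^ (-(1:ℝ)/2) * (n:ℝ)
          + (n:ℝ) ^ (-(2:ℝ)/3) * (n:ℝ) + (n:ℝ) ^ (-(1:ℝ)) * (n:ℝ) by ring,
      expand, expand, expand, expand]
    norm_num
  -- squeeze
  apply squeeze_zero (fun n => by positivity) _ hupper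
  intro n
  rcases Nat.eq_zero_or_pos n with rfl | hn
  · simp
  have hn0 : (0:ℝ) < n := by exact_mod_cast hn
  have hsqrt : (Nat.sqrt n : ℝ) ≤ (n:ℝ) ^ ((1:ℝ)/2) := by
    have hsq : (Nat.sqrt n) ^ 2 ≤ n := Nat.sqrt_le' n
    have hle : ((Nat.sqrt n : ℝ)) ^ (2:ℕ) ≤ (n : ℝ) := by exact_mod_cast hsq
    calc (Nat.sqrt n : ℝ) = (((Nat.sqrt n : ℝ)) ^ (2:ℕ)) ^ ((1:ℝ)/2) := by
          rw [← Real.rpow_natCast _ 2, ← Real.rpow_mul (by positivity)]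
          norm_num
      _ ≤ (n : ℝ) ^ ((1:ℝ)/2) := Real.rpow_le_rpow (by positivity) hle (by norm_num)
  have hfloor : (⌊(n : ℝ) ^ ((1:ℝ)/3)⌋₊ : ℝ) ≤ (n:ℝ) ^ ((1:ℝ)/3) :=
    Nat.floor_le (by positivity)
  have hb : (((Finset.Icc 1 n).filter
      (fun m => ∀ p : ℕ, p.Prime → p ∣ m → p ^ 2 ∣ m)).card : ℝ)
      ≤ ((n:ℝ) ^ ((1:ℝ)/2) + 1) * ((n:ℝ) ^ ((1:ℝ)/3) + 1) := by
    refine le_trans (key n) ?_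
    gcongr
  gcongr
end

section
/- If g is a real multiplicative arithmetic function with |g(m)| ≤ 1 for all m, and the series ∑_p (1 - g(p))/p over primes converges, then the infinite product ∏_p (1 - 1/p)·∑_{α ≥ 0} g(p^α)/p^α converges to a (finite, possibly zero) limit; in fact each factor equals 1 - (1-g(p))/p + O(1/p²) and the product converges. -/
open Filter

set_option maxHeartbeats 1000000

private lemma log_abs_bound {x : ℝ} (hx : (8:ℝ)/27 ≤ x) : |Real.log x| ≤ 4 * |x - 1| := by
  have hx0 : (0:ℝ) < x := by linarith
  rcases le_or_gt 1 x with h1 | h1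
  · rw [abs_of_nonneg (Real.log_nonneg h1), abs_of_nonneg (by linarith)]
    have := Real.log_le_sub_one_of_pos hx0
    linarith
  · have hinv : Real.log x⁻¹ ≤ x⁻¹ - 1 := Real.log_le_sub_one_of_pos (by positivity)
    rw [Real.log_inv] at hinv
    have h2 : x⁻¹ - 1 = (1 - x) / x := by field_simp
    have h3 : (1 - x) / x ≤ (1 - x) / (8/27) :=
      div_le_div_of_nonneg_left (by linarith) (by norm_num) hx
    rw [abs_of_nonpos (Real.log_nonpos (le_of_lt hx0) (le_of_lt h1)),
      abs_of_nonpos (by linarith)]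
    rw [h2] at hinv
    nlinarith

private lemma eulerFactor_est (g : ℕ → ℝ) (hg1 : g 1 = 1) (hbd : ∀ m : ℕ, |g m| ≤ 1)
    {p : ℕ} (hp : p.Prime) :
    |(1 - 1 / (p : ℝ)) * (∑' α : ℕ, g (p ^ α) / (p : ℝ) ^ α) - 1|
        ≤ (1 - g p) / p + 3 / (p : ℝ) ^ 2 ∧
      (3 ≤ p → (8:ℝ)/27 ≤ (1 - 1 / (p : ℝ)) * (∑' α : ℕ, g (p ^ α) / (p : ℝ) ^ α)) := by
  have hq : (2:ℝ) ≤ (p:ℝ) := by exact_mod_cast hp.two_le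
  have hq0 : (0:ℝ) < (p:ℝ) := by linarith
  set q : ℝ := (p:ℝ) with hqdef
  have hkey : ∀ m : ℕ, |g (p ^ m) / q ^ m| ≤ (1/q) ^ m := by
    intro m
    rw [abs_div, abs_pow, abs_of_pos hq0, div_pow, one_pow]
    gcongr
    exact hbd _
  have hgeo : ∀ m : ℕ, ((1:ℝ)/q) ^ m ≤ (1/2 : ℝ) ^ m := fun m =>
    pow_le_pow_left₀ (by positivity) (by rw [div_le_div_iff₀ hq0 (by norm_num)]; linarith) m
  have hsgeo : Summable (fun α : ℕ => (1/2 : ℝ) ^ α) :=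
    summable_geometric_of_lt_one (by norm_num) (by norm_num)
  have htsgeo : (∑' α : ℕ, (1/2 : ℝ) ^ α) = 2 := by
    rw [tsum_geometric_of_lt_one (by norm_num) (by norm_num)]; norm_num
  have hS : Summable (fun α : ℕ => g (p ^ α) / q ^ α) :=
    Summable.of_norm_bounded hsgeo fun α => (hkey α).trans (hgeo α)
  have hS1 : Summable (fun α : ℕ => g (p ^ (α + 1)) / q ^ (α + 1)) :=
    (summable_nat_add_iff 1).mpr hS
  have hbnd2 : ∀ α : ℕ, ‖g (p ^ (α + 1 + 1)) / q ^ (α + 1 + 1)‖ ≤ (1/q^2) * (1/2 : ℝ) ^ α := by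
    intro α
    calc ‖g (p ^ (α + 1 + 1)) / q ^ (α + 1 + 1)‖ ≤ (1/q) ^ (α + 1 + 1) := hkey _
      _ = (1/q^2) * (1/q) ^ α := by ring
      _ ≤ (1/q^2) * (1/2) ^ α := by
          have h0 : (0:ℝ) ≤ 1/q^2 := by positivity
          have h1 : (0:ℝ) ≤ 1/q := by positivity
          have h2 : (1:ℝ)/q ≤ 1/2 := by rw [div_le_div_iff₀ hq0 (by norm_num)]; linarith
          exact mul_le_mul_of_nonneg_left (pow_le_pow_left₀ h1 h2 α) h0
  have hS2n : Summable (fun α : ℕ => ‖g (p ^ (α + 1 + 1)) / q ^ (α + 1 + 1)‖) :=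
    Summable.of_nonneg_of_le (fun _ => norm_nonneg _) hbnd2 (hsgeo.mul_left _)
  have hS2 : Summable (fun α : ℕ => g (p ^ (α + 1 + 1)) / q ^ (α + 1 + 1)) := hS2n.of_norm
  set R : ℝ := ∑' α : ℕ, g (p ^ (α + 1 + 1)) / q ^ (α + 1 + 1) with hRdef
  have hR : |R| ≤ 2 / q ^ 2 := by
    have h1 : ‖R‖ ≤ ∑' α : ℕ, ‖g (p ^ (α + 1 + 1)) / q ^ (α + 1 + 1)‖ :=
      norm_tsum_le_tsum_norm hS2n
    have h2 : (∑' α : ℕ, ‖g (p ^ (α + 1 + 1)) / q ^ (α + 1 + 1)‖)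
        ≤ ∑' α : ℕ, (1/q^2) * (1/2 : ℝ) ^ α :=
      Summable.tsum_le_tsum hbnd2 hS2n (hsgeo.mul_left _)
    have h3 : (∑' α : ℕ, (1/q^2) * (1/2 : ℝ) ^ α) = 2 / q^2 := by
      rw [tsum_mul_left, htsgeo]; ring
    rw [Real.norm_eq_abs] at h1
    linarith [h1, h2.trans_eq h3]
  have hdecomp : (∑' α : ℕ, g (p ^ α) / q ^ α) = 1 + g p / q + R := by
    rw [Summable.tsum_eq_zero_add hS, Summable.tsum_eq_zero_add hS1]
    simp only [zero_add, pow_zero, hg1, pow_one]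
    rw [hRdef]
    ring
  have hx := abs_le.mp (hbd p)
  have hqsq : (0:ℝ) < q ^ 2 := by positivity
  constructor
  · have heq : (1 - 1/q) * (∑' α : ℕ, g (p ^ α) / q ^ α) - 1
        = (g p - 1)/q + ((1 - 1/q) * R + -(g p / q^2)) := by
      rw [hdecomp]; ring
    rw [heq]
    have e1 : |(g p - 1)/q| = (1 - g p)/q := by
      rw [abs_div, abs_of_pos hq0, abs_of_nonpos (by linarith)]
      ring
    have e2 : |(1 - 1/q) * R| ≤ 2 / q^2 := by
      rw [abs_mul]
      have h1q : (0:ℝ) < 1/q := by positivity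
      have h1q2 : (1:ℝ)/q ≤ 1/2 := by rw [div_le_div_iff₀ hq0 (by norm_num)]; linarith
      have : |1 - 1/q| ≤ 1 := by rw [abs_of_nonneg (by linarith)]; linarith
      calc |1 - 1/q| * |R| ≤ 1 * |R| := by gcongr
        _ = |R| := by ring
        _ ≤ 2/q^2 := hR
    have e3 : |(-(g p / q^2))| ≤ 1 / q^2 := by
      rw [abs_neg, abs_div, abs_of_pos hqsq]
      gcongr
      exact hbd p
    calc |(g p - 1)/q + ((1 - 1/q) * R + -(g p / q^2))|
        ≤ |(g p - 1)/q| + (|(1 - 1/q) * R| + |(-(g p / q^2))|) :=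
          (abs_add_le _ _).trans (by gcongr; exact abs_add_le _ _)
      _ ≤ (1 - g p)/q + (2/q^2 + 1/q^2) := by rw [e1]; gcongr
      _ = (1 - g p)/q + 3/q^2 := by ring
  · intro hp3
    have hq3 : (3:ℝ) ≤ q := by rw [hqdef]; exact_mod_cast hp3
    have h1q3 : (1:ℝ)/q ≤ 1/3 := by rw [div_le_div_iff₀ hq0 (by norm_num)]; linarith
    have hRlb : -(2/9 : ℝ) ≤ R := by
      have : (2:ℝ)/q^2 ≤ 2/9 := by rw [div_le_div_iff₀ hqsq (by norm_num)]; nlinarith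
      have := abs_le.mp hR
      linarith
    have hgplb : -(1/3 : ℝ) ≤ g p / q := by
      have : (-1:ℝ)/q ≤ g p / q := by gcongr; exact hx.1
      have h2 : (-1:ℝ)/q = -(1/q) := by ring
      linarith [h1q3, h2 ▸ this]
    have hSlb : (4:ℝ)/9 ≤ ∑' α : ℕ, g (p ^ α) / q ^ α := by
      rw [hdecomp]; linarith
    have hfaclb : (2:ℝ)/3 ≤ 1 - 1/q := by linarith
    nlinarith [mul_le_mul hfaclb hSlb (by norm_num) (by linarith)]

theorem euler_product_converges_of_summable (g : ℕ → ℝ)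
    (hg1 : g 1 = 1)
    (hmul : ∀ m n : ℕ, Nat.Coprime m n → g (m * n) = g m * g n)
    (hbd : ∀ m : ℕ, |g m| ≤ 1)
    (hsum : Summable (fun p : {p : ℕ // p.Prime} => (1 - g p) / (p : ℝ))) :
    ∃ L : ℝ, Tendsto (fun n : ℕ =>
        ∏ p ∈ (Finset.range (n + 1)).filter Nat.Prime,
          (1 - 1 / (p : ℝ)) * ∑' α : ℕ, g (p ^ α) / (p : ℝ) ^ α)
      atTop (nhds L) := by
  classical
  set F : ℕ → ℝ := fun p => (1 - 1 / (p : ℝ)) * ∑' α : ℕ, g (p ^ α) / (p : ℝ) ^ α with hF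
  have hj : Function.Injective (fun x : ↥{p : ℕ | p.Prime ∧ p ≠ 2} => (⟨x.1, x.2.1⟩ : {p : ℕ // p.Prime})) := by
    intro a b hab
    simpa [Subtype.ext_iff] using hab
  have hsum'0 := hsum.comp_injective hj
  have hsum' : Summable (fun x : ↥{p : ℕ | p.Prime ∧ p ≠ 2} => (1 - g x) / ((x : ℕ) : ℝ)) :=
    hsum'0.congr fun x => rfl
  have hps : Summable (fun n : ℕ => 1 / (n : ℝ) ^ 2) := by
    have := Real.summable_one_div_nat_pow (p := 2)
    exact this.mpr one_lt_two
  have hp20 := hps.comp_injective (Subtype.val_injective (p := fun p : ℕ => p.Prime ∧ p ≠ 2))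
  have hp2 : Summable (fun x : ↥{p : ℕ | p.Prime ∧ p ≠ 2} => 1 / ((x : ℕ) : ℝ) ^ 2) :=
    hp20.congr fun x => rfl
  have hB : Summable (fun x : ↥{p : ℕ | p.Prime ∧ p ≠ 2} =>
      4 * ((1 - g x) / ((x : ℕ) : ℝ)) + 12 * (1 / ((x : ℕ) : ℝ) ^ 2)) :=
    (hsum'.mul_left 4).add (hp2.mul_left 12)
  have hge3 : ∀ x : ↥{p : ℕ | p.Prime ∧ p ≠ 2}, 3 ≤ (x : ℕ) := by
    intro x
    have h1 := x.2.1.two_le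
    have h2 := x.2.2
    omega
  have hlog : Summable (fun x : ↥{p : ℕ | p.Prime ∧ p ≠ 2} => Real.log (F (x : ℕ))) := by
    apply Summable.of_norm_bounded hB
    intro x
    have hxp : (x : ℕ).Prime := x.2.1
    have hest := eulerFactor_est g hg1 hbd hxp
    have hpos := hest.2 (hge3 x)
    have h1 : |Real.log (F (x : ℕ))| ≤ 4 * |F (x : ℕ) - 1| := log_abs_bound hpos
    have h2 : |F (x : ℕ) - 1| ≤ (1 - g x) / ((x : ℕ) : ℝ) + 3 / ((x : ℕ) : ℝ) ^ 2 := hest.1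
    rw [Real.norm_eq_abs]
    calc |Real.log (F (x : ℕ))| ≤ 4 * |F (x : ℕ) - 1| := h1
      _ ≤ 4 * ((1 - g x) / ((x : ℕ) : ℝ) + 3 / ((x : ℕ) : ℝ) ^ 2) := by linarith
      _ = 4 * ((1 - g x) / ((x : ℕ) : ℝ)) + 12 * (1 / ((x : ℕ) : ℝ) ^ 2) := by ring
  have hu : Summable (Set.indicator {p : ℕ | p.Prime ∧ p ≠ 2} (fun p => Real.log (F p))) :=
    (summable_subtype_iff_indicator (s := {p : ℕ | p.Prime ∧ p ≠ 2}) (f := fun p => Real.log (F p))).mp hlog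
  set u : ℕ → ℝ := Set.indicator {p : ℕ | p.Prime ∧ p ≠ 2} (fun p => Real.log (F p)) with hudef
  have hA : Tendsto (fun n : ℕ => ∑ i ∈ Finset.range (n + 1), u i) atTop
      (nhds (∑' n, u n)) :=
    hu.hasSum.tendsto_sum_nat.comp (tendsto_add_atTop_nat 1)
  refine ⟨F 2 * Real.exp (∑' n, u n), ?_⟩
  have hT : Tendsto (fun n : ℕ => F 2 * Real.exp (∑ i ∈ Finset.range (n + 1), u i)) atTop
      (nhds (F 2 * Real.exp (∑' n, u n))) :=
    ((Real.continuous_exp.tendsto _).comp hA).const_mul (F 2)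
  apply hT.congr'
  filter_upwards [eventually_ge_atTop 2] with n hn
  set t := (Finset.range (n + 1)).filter Nat.Prime with ht
  have h2t : 2 ∈ t :=
    Finset.mem_filter.mpr ⟨Finset.mem_range.mpr (by omega), Nat.prime_two⟩
  have hposF : ∀ i ∈ t.erase 2, 0 < F i := by
    intro i hi
    have hi2 : i ≠ 2 := Finset.ne_of_mem_erase hi
    have hip : i.Prime := (Finset.mem_filter.mp (Finset.mem_of_mem_erase hi)).2
    have h3 : 3 ≤ i := by have := hip.two_le; omega
    have h8 := (eulerFactor_est g hg1 hbd hip).2 h3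
    show (0:ℝ) < (1 - 1 / (i : ℝ)) * ∑' α : ℕ, g (i ^ α) / (i : ℝ) ^ α
    linarith
  have hsum_eq : ∑ i ∈ Finset.range (n + 1), u i = ∑ i ∈ t.erase 2, Real.log (F i) := by
    have hsub : t.erase 2 ⊆ Finset.range (n + 1) :=
      (Finset.erase_subset _ _).trans (Finset.filter_subset _ _)
    have hvan : ∀ x ∈ Finset.range (n + 1), x ∉ t.erase 2 → u x = 0 := by
      intro x hx hxt
      rcases Classical.em (x ∈ {p : ℕ | p.Prime ∧ p ≠ 2}) with hxs | hxs
      · exfalso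
        exact hxt (Finset.mem_erase.mpr ⟨hxs.2, Finset.mem_filter.mpr ⟨hx, hxs.1⟩⟩)
      · exact Set.indicator_of_notMem hxs _
    rw [← Finset.sum_subset hsub hvan]
    refine Finset.sum_congr rfl fun i hi => ?_
    have hi2 : i ≠ 2 := Finset.ne_of_mem_erase hi
    have hip : i.Prime := (Finset.mem_filter.mp (Finset.mem_of_mem_erase hi)).2
    have hmem : i ∈ {p : ℕ | p.Prime ∧ p ≠ 2} := ⟨hip, hi2⟩
    exact Set.indicator_of_mem hmem _
  rw [hsum_eq, Real.exp_sum]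
  have hexp : ∏ i ∈ t.erase 2, Real.exp (Real.log (F i)) = ∏ i ∈ t.erase 2, F i :=
    Finset.prod_congr rfl fun i hi => Real.exp_log (hposF i hi)
  rw [hexp, Finset.mul_prod_erase t F h2t]
end

section
/- If g is a real multiplicative function with |g(m)| ≤ 1 and ∑_p (1 - g(p))/p = ∞ (the series of nonnegative terms diverges, assuming g(p) ≤ 1 real), then the partial products ∏_{p ≤ n} (1 - 1/p)·∑_{α ≥ 0} g(p^α)/p^α tend to 0 as n → ∞. -/
set_option maxHeartbeats 1000000


open Filter

private lemma factor_abs_bound (g : ℕ → ℝ) (hg1 : g 1 = 1) (hbd : ∀ m : ℕ, |g m| ≤ 1)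
    {p : ℕ} (hp : p.Prime) :
    |(1 - 1 / (p : ℝ)) * ∑' α : ℕ, g (p ^ α) / (p : ℝ) ^ α|
      ≤ Real.exp (3 / (p : ℝ) ^ 2 - (1 - g p) / p) := by
  have hp2 : (2 : ℝ) ≤ p := by exact_mod_cast hp.two_le
  have hp0 : (0 : ℝ) < p := by linarith
  set x : ℝ := 1 / p with hxdef
  have hx0 : 0 ≤ x := by positivity
  have hxh : x ≤ 1 / 2 := by
    rw [hxdef]
    rw [div_le_div_iff₀ hp0 (by norm_num)]
    linarith
  have hx1 : x < 1 := by linarith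
  set f : ℕ → ℝ := fun α => g (p ^ α) / (p : ℝ) ^ α with hfdef
  have hfa : ∀ α, |f α| ≤ x ^ α := by
    intro α
    rw [hfdef]
    simp only [abs_div, abs_pow, abs_of_pos hp0, hxdef, one_div, inv_pow]
    rw [div_eq_mul_inv]
    have h1 : |g (p ^ α)| * ((p : ℝ) ^ α)⁻¹ ≤ 1 * ((p : ℝ) ^ α)⁻¹ := by
      gcongr
      exact hbd _
    simpa using h1
  have hgeom : Summable (fun α : ℕ => x ^ α) := summable_geometric_of_lt_one hx0 hx1
  have hs : Summable f := by
    refine Summable.of_norm_bounded hgeom ?_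
    intro α; simpa [Real.norm_eq_abs] using hfa α
  have hs1 : Summable (fun α => f (α + 1)) := (summable_nat_add_iff 1).2 hs
  have hs2 : Summable (fun α => f (α + 1 + 1)) := (summable_nat_add_iff 1).2 hs1
  have hf0 : f 0 = 1 := by simp [hfdef, hg1]
  set a : ℝ := g p with hadef
  have ha : |a| ≤ 1 := hbd p
  rw [abs_le] at ha
  have hf1 : f 1 = a * x := by
    simp [hfdef, hadef, hxdef, div_eq_mul_inv]
  set R : ℝ := ∑' α : ℕ, f (α + 1 + 1) with hRdef
  have hRbd : |R| ≤ 2 * x ^ 2 := by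
    have h1 : |R| ≤ ∑' α : ℕ, x ^ (α + 1 + 1) := by
      calc |R| ≤ ∑' α : ℕ, |f (α + 1 + 1)| := by
            simpa [Real.norm_eq_abs] using
              norm_tsum_le_tsum_norm (f := fun α => f (α + 1 + 1))
                (by simpa [Real.norm_eq_abs] using hs2.abs)
        _ ≤ ∑' α : ℕ, x ^ (α + 1 + 1) := by
            refine Summable.tsum_le_tsum (fun α => hfa _) hs2.abs ?_
            exact (summable_nat_add_iff 2).2 hgeom
    have h2 : ∑' α : ℕ, x ^ (α + 1 + 1) = x ^ 2 * (1 - x)⁻¹ := by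
      have : ∀ α : ℕ, x ^ (α + 1 + 1) = x ^ α * x ^ 2 := by
        intro α; ring
      rw [tsum_congr this, tsum_mul_right, tsum_geometric_of_lt_one hx0 hx1]
      ring
    have h3 : (1 - x)⁻¹ ≤ 2 := by
      rw [inv_le_iff_one_le_mul₀ (by linarith)]
      linarith
    have h4 : x ^ 2 * (1 - x)⁻¹ ≤ 2 * x ^ 2 := by
      nlinarith [sq_nonneg x]
    rw [h2] at h1
    linarith
  have hS : ∑' α : ℕ, f α = 1 + (a * x + R) := by
    rw [Summable.tsum_eq_zero_add hs, hf0, Summable.tsum_eq_zero_add hs1, hf1]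
  have key : (1 - x) * ∑' α : ℕ, f α = 1 - (1 - a) * x + ((1 - x) * R - a * x ^ 2) := by
    rw [hS]; ring
  have habs : |(1 - x) * ∑' α : ℕ, f α| ≤ 1 - (1 - a) * x + 3 * x ^ 2 := by
    rw [key]
    have h1 : |1 - (1 - a) * x| = 1 - (1 - a) * x := by
      rw [abs_of_nonneg]; nlinarith
    have h2 : |(1 - x) * R - a * x ^ 2| ≤ 3 * x ^ 2 := by
      have := abs_sub (( 1 - x) * R) (a * x ^ 2)
      have h3 : |(1 - x) * R| ≤ 2 * x ^ 2 := by
        rw [abs_mul, abs_of_nonneg (by linarith : (0:ℝ) ≤ 1 - x)]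
        nlinarith [abs_nonneg R]
      have h4 : |a * x ^ 2| ≤ x ^ 2 := by
        rw [abs_mul, abs_of_nonneg (sq_nonneg x)]
        nlinarith [abs_le.mpr ha, abs_nonneg a, sq_nonneg x]
      calc |(1 - x) * R - a * x ^ 2| ≤ |(1 - x) * R| + |a * x ^ 2| := abs_sub _ _
        _ ≤ 3 * x ^ 2 := by linarith
    calc |1 - (1 - a) * x + ((1 - x) * R - a * x ^ 2)|
        ≤ |1 - (1 - a) * x| + |(1 - x) * R - a * x ^ 2| := abs_add_le _ _
      _ ≤ 1 - (1 - a) * x + 3 * x ^ 2 := by rw [h1]; linarith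
  have hexp : 1 - (1 - a) * x + 3 * x ^ 2 ≤ Real.exp (3 * x ^ 2 - (1 - a) * x) := by
    have := Real.add_one_le_exp (3 * x ^ 2 - (1 - a) * x)
    linarith
  have harg : 3 * x ^ 2 - (1 - a) * x = 3 / (p : ℝ) ^ 2 - (1 - g p) / p := by
    rw [hxdef, hadef]
    field_simp
  calc |(1 - 1 / (p : ℝ)) * ∑' α : ℕ, g (p ^ α) / (p : ℝ) ^ α|
      = |(1 - x) * ∑' α : ℕ, f α| := by rw [hxdef, hfdef]
    _ ≤ 1 - (1 - a) * x + 3 * x ^ 2 := habs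
    _ ≤ Real.exp (3 * x ^ 2 - (1 - a) * x) := hexp
    _ = Real.exp (3 / (p : ℝ) ^ 2 - (1 - g p) / p) := by rw [harg]

theorem euler_product_tendsto_zero_of_not_summable (g : ℕ → ℝ)
    (hg1 : g 1 = 1)
    (hmul : ∀ m n : ℕ, Nat.Coprime m n → g (m * n) = g m * g n)
    (hbd : ∀ m : ℕ, |g m| ≤ 1)
    (hdiv : ¬ Summable (fun p : {p : ℕ // p.Prime} => (1 - g p) / (p : ℝ))) :
    Tendsto (fun n : ℕ =>
        ∏ p ∈ (Finset.range (n + 1)).filter Nat.Prime,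
          (1 - 1 / (p : ℝ)) * ∑' α : ℕ, g (p ^ α) / (p : ℝ) ^ α)
      atTop (nhds 0) := by
  classical
  set t : ℕ → ℝ := fun q => if q.Prime then (1 - g q) / q else 0 with htdef
  have ht0 : ∀ q, 0 ≤ t q := by
    intro q
    simp only [htdef]
    split_ifs with hq
    · obtain ⟨h1, h2⟩ := abs_le.mp (hbd q)
      have hq0 : (0 : ℝ) < q := by exact_mod_cast hq.pos
      exact div_nonneg (by linarith) hq0.le
    · exact le_rfl
  -- divergence of partial sums of t
  have hdivt : ¬ Summable t := by
    intro hsum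
    apply hdiv
    have : Summable (Set.indicator {q : ℕ | q.Prime} (fun q => (1 - g q) / (q : ℝ))) := by
      refine hsum.congr ?_
      intro q
      rw [htdef, Set.indicator]
      simp [Set.mem_setOf_eq]
    exact summable_subtype_iff_indicator.2 this
  have hT : Tendsto (fun n => ∑ i ∈ Finset.range n, t i) atTop atTop :=
    (not_summable_iff_tendsto_nat_atTop_of_nonneg ht0).1 hdivt
  have hT' : Tendsto (fun n : ℕ => ∑ i ∈ Finset.range (n + 1), t i) atTop atTop :=
    hT.comp (tendsto_add_atTop_nat 1)
  -- convergent sum of 3/p^2 over primes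
  set c : ℕ → ℝ := fun q => if q.Prime then 3 / (q : ℝ) ^ 2 else 0 with hcdef
  have hc0 : ∀ q, 0 ≤ c q := by
    intro q
    simp only [hcdef]
    split_ifs with hq
    · positivity
    · exact le_refl 0
  have hcsum : Summable c := by
    have hbase : Summable (fun n : ℕ => 1 / (n : ℝ) ^ 2) :=
      Real.summable_one_div_nat_pow.2 (by norm_num)
    refine Summable.of_nonneg_of_le hc0 ?_ (hbase.mul_left 3)
    intro q
    simp only [hcdef]
    split_ifs with hq
    · rw [div_eq_mul_inv, mul_comm (3:ℝ), mul_comm (3:ℝ) (1 / (q:ℝ)^2)]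
      rw [one_div]
    · positivity
  set C : ℝ := ∑' q, c q with hCdef
  -- per-n bound
  have hbound : ∀ n : ℕ,
      |∏ p ∈ (Finset.range (n + 1)).filter Nat.Prime,
          (1 - 1 / (p : ℝ)) * ∑' α : ℕ, g (p ^ α) / (p : ℝ) ^ α|
        ≤ Real.exp (C - ∑ i ∈ Finset.range (n + 1), t i) := by
    intro n
    set F := (Finset.range (n + 1)).filter Nat.Prime with hFdef
    have hmem : ∀ p ∈ F, p.Prime := by
      intro p hp; exact (Finset.mem_filter.1 hp).2
    calc |∏ p ∈ F, (1 - 1 / (p : ℝ)) * ∑' α : ℕ, g (p ^ α) / (p : ℝ) ^ α|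
        = ∏ p ∈ F, |(1 - 1 / (p : ℝ)) * ∑' α : ℕ, g (p ^ α) / (p : ℝ) ^ α| :=
          Finset.abs_prod _ _
      _ ≤ ∏ p ∈ F, Real.exp (3 / (p : ℝ) ^ 2 - (1 - g p) / p) := by
          refine Finset.prod_le_prod (fun p _ => abs_nonneg _) ?_
          intro p hp
          exact factor_abs_bound g hg1 hbd (hmem p hp)
      _ = Real.exp (∑ p ∈ F, (3 / (p : ℝ) ^ 2 - (1 - g p) / p)) := (Real.exp_sum _ _).symm
      _ = Real.exp ((∑ p ∈ F, 3 / (p : ℝ) ^ 2) - ∑ p ∈ F, (1 - g p) / p) := by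
          rw [Finset.sum_sub_distrib]
      _ ≤ Real.exp (C - ∑ i ∈ Finset.range (n + 1), t i) := by
          apply Real.exp_le_exp.2
          have h1 : ∑ p ∈ F, (1 - g p) / (p : ℝ) = ∑ i ∈ Finset.range (n + 1), t i := by
            rw [hFdef, htdef, Finset.sum_filter]
          have h2 : ∑ p ∈ F, 3 / (p : ℝ) ^ 2 = ∑ i ∈ Finset.range (n + 1), c i := by
            rw [hFdef, hcdef, Finset.sum_filter]
          have h3 : ∑ i ∈ Finset.range (n + 1), c i ≤ C := by
            exact Summable.sum_le_tsum _ (fun i _ => hc0 i) hcsum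
          rw [h1, h2]
          linarith
  -- conclude by squeeze
  rw [tendsto_zero_iff_norm_tendsto_zero]
  have hlim : Tendsto (fun n : ℕ => Real.exp (C - ∑ i ∈ Finset.range (n + 1), t i))
      atTop (nhds 0) := by
    refine Real.tendsto_exp_atBot.comp ?_
    have : Tendsto (fun n : ℕ => -∑ i ∈ Finset.range (n + 1), t i) atTop atBot :=
      tendsto_neg_atTop_atBot.comp hT'
    simpa [sub_eq_add_neg] using tendsto_atBot_add_const_left atTop C this
  refine squeeze_zero (fun n => norm_nonneg _) ?_ hlim
  intro n
  rw [Real.norm_eq_abs]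
  exact hbound n
end
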